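/- Let Γ be a group generated by a finite symmetric set S. Then for every b ∈ ω²(Γ) there exists a constant C(b) ∈ ℝ such that for every real closed extension field R of ℝ and every completely positive ℂ-linear functional φ : ω(Γ) → C = R[i] with φ(a*) = conj(φ(a)) for all a ∈ ω(Γ), one has |φ(b)| ≤ C(b)·φ(Δ(S)). -/

import Mathlib

open Polynomial Matrix

/-- A linearly ordered field is *real closed* if every nonnegative element is a square and
every polynomial of odd degree has a root. -/
def IsRealClosed' (R : Type*) [Field R] [LinearOrder R] [IsStrictOrderedRing R] : Prop :=
  (∀ x : R, 0 ≤ x → ∃ y : R, y ^ 2 = x) ∧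
    ∀ p : Polynomial R, Odd p.natDegree → ∃ x : R, p.IsRoot x

noncomputable section

set_option maxRecDepth 8000

/-- `Cplx R = R[i] = R[X]/(X² + 1)`. -/
abbrev Cplx (R : Type*) [CommRing R] : Type _ := AdjoinRoot (X ^ 2 + 1 : R[X])

namespace Cplx

variable (R : Type*) [CommRing R]

/-- The imaginary unit `i` of `R[i]`. -/
def I : Cplx R := AdjoinRoot.root _

theorem I_sq : (I R) ^ 2 = -1 := by
  have h : (I R) ^ 2 + 1 = 0 := by
    have h := AdjoinRoot.eval₂_root (X ^ 2 + 1 : R[X])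
    simpa only [eval₂_add, eval₂_pow, eval₂_X, eval₂_one, I] using h
  exact eq_neg_of_add_eq_zero_left h

variable {R}

/-- Conjugation on `R[i]`: the `R`-algebra involution determined by `i ↦ -i`. -/
def conj : Cplx R →+* Cplx R :=
  AdjoinRoot.lift (algebraMap R _) (-(I R)) (by
    have h : (I R) ^ 2 + 1 = 0 := by
      have h := AdjoinRoot.eval₂_root (X ^ 2 + 1 : R[X])
      simpa only [eval₂_add, eval₂_pow, eval₂_X, eval₂_one, I] using h
    simp only [eval₂_add, eval₂_pow, eval₂_X, eval₂_one]
    calc (-(I R)) ^ 2 + 1 = (I R) ^ 2 + 1 := by ring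
    _ = 0 := h)

/-- `z ∈ R[i]` is *nonnegative* if it lies in `R` and is nonnegative there. -/
def nonneg {R' : Type*} [Field R'] [LinearOrder R'] [IsStrictOrderedRing R'] (z : Cplx R') : Prop :=
  ∃ r : R', 0 ≤ r ∧ z = algebraMap R' (Cplx R') r

/-- `z ∈ R[i]` is *positive* if it lies in `R` and is positive there. -/
def pos {R' : Type*} [Field R'] [LinearOrder R'] [IsStrictOrderedRing R'] (z : Cplx R') : Prop :=
  ∃ r : R', 0 < r ∧ z = algebraMap R' (Cplx R') r

/-- The embedding `ℂ = ℝ[i] → R[i]` induced by an embedding `f : ℝ → R`,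
`x + y·i ↦ f x + f y · i`. -/
def emb (f : ℝ →+* R) : ℂ →+* Cplx R where
  toFun z := algebraMap R (Cplx R) (f z.re) + algebraMap R (Cplx R) (f z.im) * I R
  map_one' := by simp
  map_zero' := by simp
  map_add' z w := by
    simp only [Complex.add_re, Complex.add_im, map_add]
    ring
  map_mul' z w := by
    have hI : (I R) ^ 2 = -1 := I_sq R
    simp only [Complex.mul_re, Complex.mul_im, map_add, map_sub, _root_.map_mul]
    linear_combination (-(algebraMap R (Cplx R) (f z.im) * algebraMap R (Cplx R) (f w.im))) * hI

/-- A matrix with entries in `R[i]` is positive semidefinite if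
`∑ⱼₖ conj(zⱼ)·zₖ·Mⱼₖ ≥ 0` for all vectors `z`. -/
def PSD {R' : Type*} [Field R'] [LinearOrder R'] [IsStrictOrderedRing R'] {m : ℕ}
    (M : Matrix (Fin m) (Fin m) (Cplx R')) : Prop :=
  ∀ z : Fin m → Cplx R', Cplx.nonneg (∑ j, ∑ k, Cplx.conj (z j) * z k * M j k)

end Cplx

universe u v


variable (Γ : Type u) [Group Γ]

/-- The involution of the complex group algebra `ℂ[Γ]`:
`(∑ a_g·g)* = ∑ conj(a_g)·g⁻¹`. -/
def gstar (a : MonoidAlgebra ℂ Γ) : MonoidAlgebra ℂ Γ :=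
  a.coeff.sum fun g c => MonoidAlgebra.single g⁻¹ (starRingEnd ℂ c)

/-- The `ℓ¹`-norm of an element of `ℂ[Γ]`: `‖∑ a_g·g‖₁ = ∑ |a_g|`. -/
def l1norm (a : MonoidAlgebra ℂ Γ) : ℝ :=
  a.coeff.sum fun _ c => ‖c‖

/-- The set `Σ²ℂ[Γ]` of sums of hermitian squares in the group algebra. -/
def SOS : Set (MonoidAlgebra ℂ Γ) :=
  {x | ∃ (n : ℕ) (a : Fin n → MonoidAlgebra ℂ Γ), x = ∑ i, gstar Γ (a i) * a i}

/-- The hermitian elements `ℂ[Γ]^h = {a : a* = a}`. -/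
def herm : Set (MonoidAlgebra ℂ Γ) := {a | gstar Γ a = a}

/-- The augmentation homomorphism `ε : ℂ[Γ] → ℂ`, `∑ a_g·g ↦ ∑ a_g`. -/
def aug : MonoidAlgebra ℂ Γ →ₐ[ℂ] ℂ := MonoidAlgebra.lift ℂ ℂ Γ 1

/-- The augmentation ideal `ω(Γ) = ker ε`. -/
def omega : Set (MonoidAlgebra ℂ Γ) := {a | aug Γ a = 0}

/-- The hermitian part `ω(Γ)^h` of the augmentation ideal. -/
def omegaH : Set (MonoidAlgebra ℂ Γ) := {a | a ∈ omega Γ ∧ gstar Γ a = a}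

/-- `Σ²ω(Γ)`: sums of hermitian squares of elements of the augmentation ideal. -/
def SOSomega : Set (MonoidAlgebra ℂ Γ) :=
  {x | ∃ (n : ℕ) (a : Fin n → MonoidAlgebra ℂ Γ),
    (∀ i, a i ∈ omega Γ) ∧ x = ∑ i, gstar Γ (a i) * a i}

/-- `ω²(Γ)`, the `ℂ`-span of products of two elements of the augmentation ideal. -/
def omegaSq : Set (MonoidAlgebra ℂ Γ) :=
  (Submodule.span ℂ {x : MonoidAlgebra ℂ Γ |
    ∃ a ∈ omega Γ, ∃ b ∈ omega Γ, x = a * b} : Submodule ℂ (MonoidAlgebra ℂ Γ))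

/-- `c(g) = g - 1 ∈ ω(Γ)`. -/
def cE (g : Γ) : MonoidAlgebra ℂ Γ := MonoidAlgebra.of ℂ Γ g - 1

/-- The Laplace operator `Δ(S) = |S| - ∑_{s ∈ S} s` of a finite subset `S ⊆ Γ`. -/
def Delta (S : Finset Γ) : MonoidAlgebra ℂ Γ :=
  (S.card : MonoidAlgebra ℂ Γ) - ∑ s ∈ S, MonoidAlgebra.of ℂ Γ s


section OmegaFunctional

variable {R : Type v} [Field R] [LinearOrder R] [IsStrictOrderedRing R]
variable {G : Type u} [Group G]

/-- The conjugate transpose of a matrix over `ℂ[Γ]`: `(M*)ⱼₖ = (Mₖⱼ)*`. -/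
def mstar {m : ℕ} (M : Matrix (Fin m) (Fin m) (MonoidAlgebra ℂ G)) :
    Matrix (Fin m) (Fin m) (MonoidAlgebra ℂ G) := fun j k => gstar G (M k j)

/-- `φ : ω(Γ) → C = R[i]` is `ℂ`-linear and satisfies `φ(a*) = conj (φ a)`.
(A functional on the augmentation ideal is encoded as a total map on `ℂ[Γ]`, with all
conditions imposed only on `ω(Γ)`.) -/
def OmegaHermLinear (f : ℝ →+* R) (φ : MonoidAlgebra ℂ G → Cplx R) : Prop :=
  (∀ a b : MonoidAlgebra ℂ G, a ∈ omega G → b ∈ omega G → φ (a + b) = φ a + φ b) ∧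
  (∀ (c : ℂ) (a : MonoidAlgebra ℂ G), a ∈ omega G → φ (c • a) = Cplx.emb f c * φ a) ∧
  (∀ a : MonoidAlgebra ℂ G, a ∈ omega G → φ (gstar G a) = Cplx.conj (φ a))

/-- `φ : ω(Γ) → C = R[i]` is *completely positive*: for every `m`, the entrywise map
`Mₘ(ω(Γ)) → Mₘ(C)` sends sums of hermitian squares to positive semidefinite matrices. -/
def OmegaCompletelyPositive (φ : MonoidAlgebra ℂ G → Cplx R) : Prop :=
  ∀ (m n : ℕ) (B : Fin n → Matrix (Fin m) (Fin m) (MonoidAlgebra ℂ G)),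
    (∀ l j k, B l j k ∈ omega G) →
    Cplx.PSD (fun j k => φ ((∑ l, mstar (B l) * B l) j k))

/-- `φ : ω(Γ) → C = R[i]` is *positive*: `φ(a*a) ≥ 0` for all `a ∈ ω(Γ)`. -/
def OmegaPositive (φ : MonoidAlgebra ℂ G → Cplx R) : Prop :=
  ∀ a ∈ omega G, Cplx.nonneg (φ (gstar G a * a))

end OmegaFunctional


section CplxLem

open Cplx

variable {R : Type*} [Field R] [LinearOrder R] [IsStrictOrderedRing R]

lemma Cplx.degree_ne : (X ^ 2 + 1 : R[X]).degree ≠ 0 := by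
  have h : (X ^ 2 + 1 : R[X]).degree = 2 := by
    have := Polynomial.degree_X_pow_add_C (R := R) (n := 2) (by norm_num) 1
    simpa using this
  rw [h]; norm_num

lemma Cplx.aR_injective : Function.Injective (algebraMap R (Cplx R)) := by
  rw [AdjoinRoot.algebraMap_eq]
  exact AdjoinRoot.of.injective_of_degree_ne_zero Cplx.degree_ne

lemma Cplx.conj_algebraMap (x : R) :
    Cplx.conj (algebraMap R (Cplx R) x) = algebraMap R (Cplx R) x := by
  rw [AdjoinRoot.algebraMap_eq]
  exact AdjoinRoot.lift_of _

lemma Cplx.conj_I' : Cplx.conj (I R) = -(I R) := AdjoinRoot.lift_root _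

lemma Cplx.emb_apply (f : ℝ →+* R) (c : ℂ) :
    Cplx.emb f c = algebraMap R (Cplx R) (f c.re) + algebraMap R (Cplx R) (f c.im) * I R := rfl

lemma Cplx.emb_ofReal (f : ℝ →+* R) (r : ℝ) :
    Cplx.emb f (r : ℂ) = algebraMap R (Cplx R) (f r) := by
  simp [Cplx.emb_apply]

lemma Cplx.emb_I (f : ℝ →+* R) : Cplx.emb f Complex.I = I R := by
  simp [Cplx.emb_apply]

lemma Cplx.nonneg_aR {r : R} (hr : 0 ≤ r) : Cplx.nonneg (algebraMap R (Cplx R) r) :=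
  ⟨r, hr, rfl⟩

end CplxLem

section GstarLem

variable {G : Type u} [Group G]

lemma gstar_single (g : G) (c : ℂ) :
    gstar G (MonoidAlgebra.single g c) = MonoidAlgebra.single g⁻¹ (starRingEnd ℂ c) := by
  unfold gstar
  exact Finsupp.sum_single_index (by simp)

lemma gstar_add (a b : MonoidAlgebra ℂ G) :
    gstar G (a + b) = gstar G a + gstar G b := by
  unfold gstar
  exact Finsupp.sum_add_index' (by simp) (by intro g c d; rw [map_add]; exact MonoidAlgebra.single_add _ _ _)

lemma gstar_zero : gstar G (0 : MonoidAlgebra ℂ G) = 0 := by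
  unfold gstar; simp

/-- `gstar` as an additive monoid hom. -/
def gstarHom : MonoidAlgebra ℂ G →+ MonoidAlgebra ℂ G where
  toFun := gstar G
  map_zero' := gstar_zero
  map_add' := gstar_add

lemma gstar_sum {ι : Type*} (s : Finset ι) (a : ι → MonoidAlgebra ℂ G) :
    gstar G (∑ i ∈ s, a i) = ∑ i ∈ s, gstar G (a i) :=
  map_sum (gstarHom (G := G)) a s

lemma gstar_smul (c : ℂ) (a : MonoidAlgebra ℂ G) :
    gstar G (c • a) = (starRingEnd ℂ c) • gstar G a := by
  induction a using MonoidAlgebra.induction_linear with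
  | zero => simp [gstar_zero]
  | add f g hf hg => rw [smul_add, gstar_add, hf, hg, gstar_add, smul_add]
  | single g d =>
      rw [MonoidAlgebra.smul_single, gstar_single, gstar_single, MonoidAlgebra.smul_single, smul_eq_mul,
        smul_eq_mul, _root_.map_mul]

lemma gstar_neg (a : MonoidAlgebra ℂ G) : gstar G (-a) = -gstar G a := by
  have := gstar_smul (-1 : ℂ) a
  simpa using this

lemma gstar_sub (a b : MonoidAlgebra ℂ G) :
    gstar G (a - b) = gstar G a - gstar G b := by
  rw [sub_eq_add_neg, gstar_add, gstar_neg, sub_eq_add_neg]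

lemma gstar_one : gstar G (1 : MonoidAlgebra ℂ G) = 1 := by
  rw [MonoidAlgebra.one_def, gstar_single]; simp [MonoidAlgebra.one_def]

lemma gstar_gstar (a : MonoidAlgebra ℂ G) : gstar G (gstar G a) = a := by
  induction a using MonoidAlgebra.induction_linear with
  | zero => simp [gstar_zero]
  | add f g hf hg => rw [gstar_add, gstar_add, hf, hg]
  | single g d => rw [gstar_single, gstar_single]; simp

lemma aug_single (g : G) (c : ℂ) : aug G (MonoidAlgebra.single g c) = c := by
  unfold aug
  rw [MonoidAlgebra.lift_single]; simp

lemma omega_zero : (0 : MonoidAlgebra ℂ G) ∈ omega G := by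
  simp [omega]

lemma omega_add {a b : MonoidAlgebra ℂ G} (ha : a ∈ omega G) (hb : b ∈ omega G) :
    a + b ∈ omega G := by
  simp only [omega, Set.mem_setOf_eq, map_add] at *
  rw [ha, hb, add_zero]

lemma omega_smul (c : ℂ) {a : MonoidAlgebra ℂ G} (ha : a ∈ omega G) :
    c • a ∈ omega G := by
  simp only [omega, Set.mem_setOf_eq, _root_.map_smul] at *
  rw [ha, smul_zero]

lemma omega_neg {a : MonoidAlgebra ℂ G} (ha : a ∈ omega G) : -a ∈ omega G := by
  simpa using omega_smul (-1 : ℂ) ha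

lemma omega_sub {a b : MonoidAlgebra ℂ G} (ha : a ∈ omega G) (hb : b ∈ omega G) :
    a - b ∈ omega G := by
  rw [sub_eq_add_neg]; exact omega_add ha (omega_neg hb)

lemma omega_sum {ι : Type*} {s : Finset ι} {a : ι → MonoidAlgebra ℂ G}
    (ha : ∀ i ∈ s, a i ∈ omega G) : (∑ i ∈ s, a i) ∈ omega G := by
  classical
  induction s using Finset.induction_on with
  | empty => simpa using omega_zero
  | insert _ _ h ih =>
      rw [Finset.sum_insert h]
      exact omega_add (ha _ (Finset.mem_insert_self _ _))
        (ih fun i hi => ha i (Finset.mem_insert_of_mem hi))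

lemma omega_mul_left (x : MonoidAlgebra ℂ G) {a : MonoidAlgebra ℂ G} (ha : a ∈ omega G) :
    x * a ∈ omega G := by
  simp only [omega, Set.mem_setOf_eq, _root_.map_mul] at *
  rw [ha, mul_zero]

lemma omega_mul_right {a : MonoidAlgebra ℂ G} (ha : a ∈ omega G) (x : MonoidAlgebra ℂ G) :
    a * x ∈ omega G := by
  simp only [omega, Set.mem_setOf_eq, _root_.map_mul] at *
  rw [ha, zero_mul]

lemma omega_gstar {a : MonoidAlgebra ℂ G} (ha : a ∈ omega G) : gstar G a ∈ omega G := by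
  simp only [omega, Set.mem_setOf_eq] at *
  have key : ∀ b : MonoidAlgebra ℂ G, aug G (gstar G b) = starRingEnd ℂ (aug G b) := by
    intro b
    induction b using MonoidAlgebra.induction_linear with
    | zero => simp [gstar_zero]
    | add f g hf hg => rw [gstar_add, map_add, map_add, hf, hg, map_add]
    | single g d => rw [gstar_single, aug_single, aug_single]
  rw [key, ha, map_zero]

lemma omega_single_sub_one (g : G) :
    (MonoidAlgebra.single g 1 - 1 : MonoidAlgebra ℂ G) ∈ omega G := by
  simp only [omega, Set.mem_setOf_eq, map_sub, aug_single]
  simp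

lemma omega_Delta (S : Finset G) : Delta G S ∈ omega G := by
  simp only [omega, Set.mem_setOf_eq, Delta, map_sub, map_natCast, map_sum]
  have : ∀ s ∈ S, aug G (MonoidAlgebra.of ℂ G s) = 1 := by
    intro s _
    rw [MonoidAlgebra.of_apply, aug_single]
  rw [Finset.sum_congr rfl this]
  simp

end GstarLem

section SOSLem

variable {G : Type u} [Group G]

lemma sos_zero : (0 : MonoidAlgebra ℂ G) ∈ SOSomega G :=
  ⟨0, fun i => 0, fun i => i.elim0, by simp⟩

lemma sos_sq {a : MonoidAlgebra ℂ G} (ha : a ∈ omega G) :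
    gstar G a * a ∈ SOSomega G :=
  ⟨1, fun _ => a, fun _ => ha, by simp⟩

lemma sos_add {x y : MonoidAlgebra ℂ G} (hx : x ∈ SOSomega G) (hy : y ∈ SOSomega G) :
    x + y ∈ SOSomega G := by
  obtain ⟨n, a, ha, rfl⟩ := hx
  obtain ⟨m, c, hc, rfl⟩ := hy
  refine ⟨n + m, Fin.addCases a c, ?_, ?_⟩
  · intro i
    induction i using Fin.addCases with
    | left i => simpa using ha i
    | right i => simpa using hc i
  · rw [Fin.sum_univ_add]
    simp

lemma sos_finset_sum {ι : Type*} (s : Finset ι) (x : ι → MonoidAlgebra ℂ G)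
    (hx : ∀ i ∈ s, x i ∈ SOSomega G) : (∑ i ∈ s, x i) ∈ SOSomega G :=
  Finset.sum_induction x (· ∈ SOSomega G) (fun _ _ => sos_add) sos_zero hx

lemma sos_smul {r : ℝ} (hr : 0 ≤ r) {x : MonoidAlgebra ℂ G} (hx : x ∈ SOSomega G) :
    (r : ℂ) • x ∈ SOSomega G := by
  obtain ⟨n, a, ha, rfl⟩ := hx
  refine ⟨n, fun i => ((Real.sqrt r : ℂ)) • a i, fun i => omega_smul _ (ha i), ?_⟩
  rw [Finset.smul_sum]
  refine Finset.sum_congr rfl fun i _ => ?_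
  rw [gstar_smul, smul_mul_assoc, mul_smul_comm, smul_smul, Complex.conj_ofReal,
    ← Complex.ofReal_mul, Real.mul_self_sqrt hr]

lemma sos_subset_omega {x : MonoidAlgebra ℂ G} (hx : x ∈ SOSomega G) : x ∈ omega G := by
  obtain ⟨n, a, ha, rfl⟩ := hx
  exact omega_sum fun i _ => omega_mul_left _ (ha i)

/-- The key computation: `(w(s-1))* (w(s-1)) = 2 - s - s⁻¹`. -/
lemma gstar_gen_mul (w s : G) :
    gstar G (MonoidAlgebra.single w 1 * (MonoidAlgebra.single s 1 - 1)) *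
      (MonoidAlgebra.single w 1 * (MonoidAlgebra.single s 1 - 1)) =
    (2 : MonoidAlgebra ℂ G) - MonoidAlgebra.single s 1 - MonoidAlgebra.single s⁻¹ 1 := by
  have h1 : MonoidAlgebra.single w (1:ℂ) * (MonoidAlgebra.single s 1 - 1) =
      MonoidAlgebra.single (w * s) 1 - MonoidAlgebra.single w 1 := by
    rw [mul_sub, mul_one, MonoidAlgebra.single_mul_single, mul_one]
  rw [h1, gstar_sub, gstar_single, gstar_single, _root_.map_one]
  rw [sub_mul, mul_sub, mul_sub, MonoidAlgebra.single_mul_single,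
    MonoidAlgebra.single_mul_single, MonoidAlgebra.single_mul_single,
    MonoidAlgebra.single_mul_single]
  simp only [mul_one, inv_mul_cancel]
  have h2 : w⁻¹ * (w * s) = s := by group
  have h3 : (w * s)⁻¹ * w = s⁻¹ := by group
  rw [h2, h3, ← MonoidAlgebra.one_def,
    show (2 : MonoidAlgebra ℂ G) = 1 + 1 from one_add_one_eq_two.symm]
  abel

/-- `∑_{s∈S} (2 - s - s⁻¹) = 2Δ(S)` for symmetric `S`. -/
lemma sum_q_eq_two_delta (S : Finset G) (hsym : ∀ s ∈ S, s⁻¹ ∈ S) :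
    ∑ s ∈ S, ((2 : MonoidAlgebra ℂ G) - MonoidAlgebra.single s 1 - MonoidAlgebra.single s⁻¹ 1)
      = (2 : ℂ) • Delta G S := by
  have hre : ∑ s ∈ S, MonoidAlgebra.single s⁻¹ (1:ℂ) = ∑ s ∈ S, MonoidAlgebra.single s 1 := by
    refine Finset.sum_nbij' (fun s => s⁻¹) (fun s => s⁻¹) ?_ ?_ ?_ ?_ ?_ <;>
      simp_all [hsym]
  rw [Finset.sum_sub_distrib, Finset.sum_sub_distrib, hre, Finset.sum_const]
  rw [two_smul ℂ (Delta G S), Delta]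
  simp only [MonoidAlgebra.of_apply, nsmul_eq_mul]
  rw [mul_two]
  abel

/-- Sum-of-squares inequality certificate:
`(∑ξ)*(∑ξ) + σ = n·∑ ξᵢ*ξᵢ` for some `σ ∈ Σ²ω`. -/
lemma sq_sum_certificate (n : ℕ) (ξ : Fin n → MonoidAlgebra ℂ G)
    (hξ : ∀ i, ξ i ∈ omega G) :
    ∃ σ ∈ SOSomega G,
      gstar G (∑ i, ξ i) * (∑ i, ξ i) + σ = (n : ℂ) • ∑ i, gstar G (ξ i) * ξ i := by
  classical
  refine ⟨(((1/2 : ℝ)) : ℂ) • ∑ p : Fin n × Fin n,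
      gstar G (ξ p.1 - ξ p.2) * (ξ p.1 - ξ p.2), ?_, ?_⟩
  · exact sos_smul (by norm_num)
      (sos_finset_sum _ _ fun p _ => sos_sq (omega_sub (hξ p.1) (hξ p.2)))
  · have expand : ∀ i j : Fin n, gstar G (ξ i - ξ j) * (ξ i - ξ j) =
        gstar G (ξ i) * ξ i - gstar G (ξ i) * ξ j - gstar G (ξ j) * ξ i
          + gstar G (ξ j) * ξ j := by
      intro i j
      rw [gstar_sub]
      noncomm_ring
    rw [Fintype.sum_prod_type]
    simp only [expand]
    simp only [Finset.sum_sub_distrib, Finset.sum_add_distrib, Finset.sum_const,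
      Finset.card_univ, Fintype.card_fin]
    rw [gstar_sum]
    set X := (∑ i, gstar G (ξ i)) * (∑ i, ξ i) with hX
    set Y := ∑ i, gstar G (ξ i) * ξ i with hY
    have e1 : ∑ i : Fin n, ∑ j : Fin n, gstar G (ξ i) * ξ j = X := by
      rw [hX, Finset.sum_mul]
      exact Finset.sum_congr rfl fun i _ => (Finset.mul_sum _ _ _).symm
    have e2 : ∑ i : Fin n, ∑ j : Fin n, gstar G (ξ j) * ξ i = X := by
      rw [Finset.sum_comm]; exact e1
    have e3 : ∑ i : Fin n, n • (gstar G (ξ i) * ξ i) = n • Y := by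
      rw [hY, Finset.smul_sum]
    rw [e1, e2, e3, ← Nat.cast_smul_eq_nsmul ℂ n Y,
      show ((1/2 : ℝ) : ℂ) = (1/2 : ℂ) by norm_num]
    module

end SOSLem

section SpanLem

variable {G : Type u} [Group G]

/-- Generators `w(s-1)` of the augmentation ideal. -/
def genSet (S : Finset G) : Set (MonoidAlgebra ℂ G) :=
  {x | ∃ w : G, ∃ s ∈ S, x = MonoidAlgebra.single w 1 * (MonoidAlgebra.single s 1 - 1)}

lemma single_mul_span {S : Finset G} (g : G) {x : MonoidAlgebra ℂ G}
    (hx : x ∈ Submodule.span ℂ (genSet S)) :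
    MonoidAlgebra.single g (1:ℂ) * x ∈ Submodule.span ℂ (genSet S) := by
  induction hx using Submodule.span_induction with
  | mem y hy =>
      obtain ⟨w, s, hs, rfl⟩ := hy
      refine Submodule.subset_span ⟨g * w, s, hs, ?_⟩
      rw [← mul_assoc, MonoidAlgebra.single_mul_single, mul_one]
  | zero => simpa using Submodule.zero_mem _
  | add y z hy hz ihy ihz => rw [mul_add]; exact Submodule.add_mem _ ihy ihz
  | smul c y hy ihy => rw [mul_smul_comm]; exact Submodule.smul_mem _ _ ihy

lemma single_sub_one_mem_span {S : Finset G} (hgen : Subgroup.closure (S : Set G) = ⊤)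
    (g : G) : (MonoidAlgebra.single g (1:ℂ) - 1) ∈ Submodule.span ℂ (genSet S) := by
  have hg : g ∈ Subgroup.closure (S : Set G) := by rw [hgen]; trivial
  induction hg using Subgroup.closure_induction with
  | mem s hs =>
      have h : MonoidAlgebra.single s (1:ℂ) - 1 =
          MonoidAlgebra.single 1 1 * (MonoidAlgebra.single s 1 - 1) := by
        rw [← MonoidAlgebra.one_def, one_mul]
      rw [h]; exact Submodule.subset_span ⟨1, s, hs, rfl⟩
  | one => rw [← MonoidAlgebra.one_def, sub_self]; exact Submodule.zero_mem _
  | mul x y hx hy ihx ihy =>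
      have h : MonoidAlgebra.single (x * y) (1:ℂ) - 1 =
          MonoidAlgebra.single x 1 * (MonoidAlgebra.single y 1 - 1)
            + (MonoidAlgebra.single x 1 - 1) := by
        rw [mul_sub, MonoidAlgebra.single_mul_single, mul_one, mul_one]; abel
      rw [h]
      exact Submodule.add_mem _ (single_mul_span x ihy) ihx
  | inv x hx ihx =>
      have h : MonoidAlgebra.single x⁻¹ (1:ℂ) - 1 =
          -(MonoidAlgebra.single x⁻¹ 1 * (MonoidAlgebra.single x 1 - 1)) := by
        rw [mul_sub, MonoidAlgebra.single_mul_single, mul_one, mul_one, inv_mul_cancel,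
          MonoidAlgebra.one_def]
        abel
      rw [h]
      exact Submodule.neg_mem _ (single_mul_span x⁻¹ ihx)

lemma omega_subset_span {S : Finset G} (hgen : Subgroup.closure (S : Set G) = ⊤)
    {z : MonoidAlgebra ℂ G} (hz : z ∈ omega G) :
    z ∈ Submodule.span ℂ (genSet S) := by
  have h1 : z = ∑ g ∈ z.coeff.support, MonoidAlgebra.single g (z.coeff g) := by
    conv_lhs => rw [← MonoidAlgebra.sum_coeff_single z]
    rfl
  have h2 : ∑ g ∈ z.coeff.support, z.coeff g = 0 := by
    have := hz
    simp only [omega, Set.mem_setOf_eq] at this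
    calc ∑ g ∈ z.coeff.support, z.coeff g = aug G z := by
          conv_rhs => rw [h1]
          rw [map_sum]
          exact (Finset.sum_congr rfl fun g _ => (aug_single g (z.coeff g)).symm)
      _ = 0 := this
  have hrep : z = ∑ g ∈ z.coeff.support, z.coeff g • (MonoidAlgebra.single g (1:ℂ) - 1) := by
    have e : ∀ g : G, z.coeff g • (MonoidAlgebra.single g (1:ℂ) - 1)
        = MonoidAlgebra.single g (z.coeff g) - z.coeff g • 1 := by
      intro g
      rw [smul_sub, MonoidAlgebra.smul_single', mul_one]
    simp only [e, Finset.sum_sub_distrib, ← Finset.sum_smul, h2, zero_smul, sub_zero]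
    exact h1
  rw [hrep]
  exact Submodule.sum_mem _ fun g _ =>
    Submodule.smul_mem _ _ (single_sub_one_mem_span hgen g)

lemma q_sos (s : G) :
    gstar G (MonoidAlgebra.single s (1:ℂ) - 1) * (MonoidAlgebra.single s 1 - 1) =
      (2 : MonoidAlgebra ℂ G) - MonoidAlgebra.single s 1 - MonoidAlgebra.single s⁻¹ 1 := by
  have h := gstar_gen_mul (G := G) 1 s
  rwa [← MonoidAlgebra.one_def, one_mul] at h

lemma q_mem_sos (s : G) :
    ((2 : MonoidAlgebra ℂ G) - MonoidAlgebra.single s 1 - MonoidAlgebra.single s⁻¹ 1)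
      ∈ SOSomega G := by
  have h := sos_sq (omega_single_sub_one (G := G) s)
  rwa [q_sos] at h

/-- **Lemma A**: for `z ∈ ω(Γ)` there is `C ≥ 0` with `C·Δ - z*z ∈ Σ²ω`. -/
lemma lemmaA {S : Finset G} (hsym : ∀ s ∈ S, s⁻¹ ∈ S)
    (hgen : Subgroup.closure (S : Set G) = ⊤)
    {z : MonoidAlgebra ℂ G} (hz : z ∈ omega G) :
    ∃ C : ℝ, 0 ≤ C ∧ (C : ℂ) • Delta G S - gstar G z * z ∈ SOSomega G := by
  classical
  obtain ⟨n, c, v, hrep⟩ := Submodule.mem_span_set'.mp (omega_subset_span hgen hz)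
  set ξ : Fin n → MonoidAlgebra ℂ G := fun i => c i • (v i : MonoidAlgebra ℂ G) with hξdef
  have hgen_i : ∀ i, ∃ w : G, ∃ s ∈ S,
      (v i : MonoidAlgebra ℂ G) = MonoidAlgebra.single w 1 * (MonoidAlgebra.single s 1 - 1) :=
    fun i => (v i).2
  choose w s hsS hvi using hgen_i
  have hξω : ∀ i, ξ i ∈ omega G := by
    intro i
    rw [hξdef]
    exact omega_smul _ ((hvi i) ▸ omega_mul_left _ (omega_single_sub_one (s i)))
  have hzsum : z = ∑ i, ξ i := hrep.symm
  obtain ⟨σ, hσmem, hid⟩ := sq_sum_certificate n ξ hξω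
  have hσ' : (n : ℂ) • (∑ i, gstar G (ξ i) * ξ i) - gstar G z * z = σ := by
    rw [hzsum, ← hid]; abel
  have hξsq : ∀ i, gstar G (ξ i) * ξ i = (Complex.normSq (c i) : ℂ) •
      ((2 : MonoidAlgebra ℂ G) - MonoidAlgebra.single (s i) 1
        - MonoidAlgebra.single (s i)⁻¹ 1) := by
    intro i
    rw [hξdef]
    simp only
    rw [gstar_smul, smul_mul_assoc, mul_smul_comm, smul_smul, hvi i, gstar_gen_mul,
      ← Complex.normSq_eq_conj_mul_self]
  -- each `2Δ - q(sᵢ)` is a sum of squares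
  have hDi : ∀ i, ((2:ℂ) • Delta G S - ((2 : MonoidAlgebra ℂ G)
      - MonoidAlgebra.single (s i) 1 - MonoidAlgebra.single (s i)⁻¹ 1)) ∈ SOSomega G := by
    intro i
    rw [← sum_q_eq_two_delta S hsym,
      ← Finset.add_sum_erase _ _ (hsS i), add_sub_cancel_left]
    exact sos_finset_sum _ _ fun s' _ => q_mem_sos s'
  set D : Fin n → MonoidAlgebra ℂ G := fun i =>
    ((n * Complex.normSq (c i) : ℝ) : ℂ) • ((2:ℂ) • Delta G S
      - ((2 : MonoidAlgebra ℂ G) - MonoidAlgebra.single (s i) 1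
        - MonoidAlgebra.single (s i)⁻¹ 1)) with hDdef
  refine ⟨∑ i, 2 * n * Complex.normSq (c i), ?_, ?_⟩
  · exact Finset.sum_nonneg fun i _ =>
      mul_nonneg (by positivity) (Complex.normSq_nonneg _)
  · have keyeq : ((∑ i, 2 * n * Complex.normSq (c i) : ℝ) : ℂ) • Delta G S
        - gstar G z * z = (∑ i, D i) + σ := by
      rw [← hσ']
      have h4 : ∀ i, D i = ((n * Complex.normSq (c i) : ℝ) : ℂ) • ((2:ℂ) • Delta G S)
          - (n : ℂ) • (gstar G (ξ i) * ξ i) := by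
        intro i
        rw [hDdef]
        simp only
        rw [smul_sub, hξsq i]
        congr 1
        rw [smul_smul]
        push_cast
        ring_nf
      simp only [h4, Finset.sum_sub_distrib, ← Finset.smul_sum]
      have h5 : ∑ i, ((n * Complex.normSq (c i) : ℝ) : ℂ) • ((2:ℂ) • Delta G S)
          = ((∑ i, 2 * n * Complex.normSq (c i) : ℝ) : ℂ) • Delta G S := by
        simp only [smul_smul, ← Finset.sum_smul]
        congr 1
        push_cast
        exact Finset.sum_congr rfl fun i _ => by ring
      rw [h5]
      abel
    rw [keyeq]
    exact sos_add (sos_finset_sum _ _ fun i _ =>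
      sos_smul (mul_nonneg (Nat.cast_nonneg n) (Complex.normSq_nonneg _)) (hDi i)) hσmem

end SpanLem

section PhiLem

variable {R : Type v} [Field R] [LinearOrder R] [IsStrictOrderedRing R] {G : Type u} [Group G]
variable {f : ℝ →+* R} {φ : MonoidAlgebra ℂ G → Cplx R}

lemma phi_zero (hlin : OmegaHermLinear f φ) : φ 0 = 0 := by
  have h := hlin.2.1 0 0 omega_zero
  simpa using h

lemma phi_add (hlin : OmegaHermLinear f φ) {a b : MonoidAlgebra ℂ G}
    (ha : a ∈ omega G) (hb : b ∈ omega G) : φ (a + b) = φ a + φ b :=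
  hlin.1 a b ha hb

lemma phi_smul (hlin : OmegaHermLinear f φ) (c : ℂ) {a : MonoidAlgebra ℂ G}
    (ha : a ∈ omega G) : φ (c • a) = Cplx.emb f c * φ a :=
  hlin.2.1 c a ha

lemma phi_neg (hlin : OmegaHermLinear f φ) {a : MonoidAlgebra ℂ G}
    (ha : a ∈ omega G) : φ (-a) = -φ a := by
  have h := hlin.2.1 (-1) a ha
  rw [neg_one_smul] at h
  rw [h, map_neg, _root_.map_one, neg_one_mul]

lemma phi_sub (hlin : OmegaHermLinear f φ) {a b : MonoidAlgebra ℂ G}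
    (ha : a ∈ omega G) (hb : b ∈ omega G) : φ (a - b) = φ a - φ b := by
  rw [sub_eq_add_neg, phi_add hlin ha (omega_neg hb), phi_neg hlin hb, sub_eq_add_neg]

lemma phi_sos_nonneg (hcp : OmegaCompletelyPositive (R := R) φ) {x : MonoidAlgebra ℂ G}
    (hx : x ∈ SOSomega G) : Cplx.nonneg (φ x) := by
  obtain ⟨n, a, ha, rfl⟩ := hx
  have h := hcp 1 n (fun l => Matrix.of fun _ _ => a l) (fun l _ _ => ha l)
  have h1 := h (fun _ => 1)
  simp only [Fin.sum_univ_one, _root_.map_one, one_mul, Matrix.sum_apply,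
    Matrix.mul_apply, mstar, Matrix.of_apply] at h1
  exact h1

/-- `φ(Δ) = d ≥ 0` for symmetric `S`. -/
lemma phi_Delta (hlin : OmegaHermLinear f φ) (hcp : OmegaCompletelyPositive (R := R) φ)
    {S : Finset G} (hsym : ∀ s ∈ S, s⁻¹ ∈ S) :
    ∃ d : R, 0 ≤ d ∧ φ (Delta G S) = algebraMap R (Cplx R) d := by
  have h2 : ((2:ℂ) • Delta G S) ∈ SOSomega G := by
    rw [← sum_q_eq_two_delta S hsym]
    exact sos_finset_sum _ _ fun s' _ => q_mem_sos s'
  obtain ⟨r, hr, heq⟩ := phi_sos_nonneg hcp h2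
  rw [phi_smul hlin 2 (omega_Delta S)] at heq
  have h3 : Cplx.emb f (2:ℂ) = algebraMap R (Cplx R) 2 := by
    rw [show (2:ℂ) = ((2:ℝ):ℂ) by norm_num, Cplx.emb_ofReal, map_ofNat]
  refine ⟨r / 2, by positivity, ?_⟩
  have h4 := congrArg (fun z => algebraMap R (Cplx R) 2⁻¹ * z) heq
  rw [h3, ← mul_assoc, ← _root_.map_mul, ← _root_.map_mul] at h4
  norm_num at h4
  rw [h4]
  rw [← _root_.map_mul]
  congr 1
  ring

/-- Bound `φ(x* x) ≤ f(C)·d` from a certificate `C·Δ - x*x ∈ Σ²ω`. -/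
lemma phi_bound (hlin : OmegaHermLinear f φ) (hcp : OmegaCompletelyPositive (R := R) φ)
    {S : Finset G} {x : MonoidAlgebra ℂ G} (hx : x ∈ omega G) {C : ℝ}
    (hcert : (C : ℂ) • Delta G S - gstar G x * x ∈ SOSomega G)
    {d : R} (hd : φ (Delta G S) = algebraMap R (Cplx R) d) :
    ∃ r : R, 0 ≤ r ∧ r ≤ f C * d ∧ φ (gstar G x * x) = algebraMap R (Cplx R) r := by
  obtain ⟨r₁, hr₁, he₁⟩ := phi_sos_nonneg hcp (sos_sq hx)
  obtain ⟨r₂, hr₂, he₂⟩ := phi_sos_nonneg hcp hcert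
  have hsq : gstar G x * x ∈ omega G := omega_mul_left _ hx
  have hωd : (C : ℂ) • Delta G S - gstar G x * x ∈ omega G :=
    omega_sub (omega_smul _ (omega_Delta S)) hsq
  have hsplit : φ ((C : ℂ) • Delta G S) = φ (gstar G x * x)
      + φ ((C : ℂ) • Delta G S - gstar G x * x) := by
    rw [← phi_add hlin hsq hωd]
    congr 1
    abel
  rw [phi_smul hlin _ (omega_Delta S), hd, Cplx.emb_ofReal, he₁, he₂,
    ← _root_.map_mul, ← _root_.map_add] at hsplit
  have := Cplx.aR_injective hsplit
  exact ⟨r₁, hr₁, by linarith, he₁⟩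

end PhiLem

section MainProof

variable {G : Type u} [Group G]

lemma ordf_nonneg {R : Type v} [Field R] [LinearOrder R] [IsStrictOrderedRing R] (f : ℝ →+*o R) {r : ℝ} (hr : 0 ≤ r) :
    0 ≤ f.toRingHom r := by
  have h := f.monotone' hr
  simpa using h

/-- The polarization identity `4(xy) = (y+x*)*(y+x*) - (y-x*)*(y-x*)
+ i[(y+ix*)*(y+ix*) - (y-ix*)*(y-ix*)]`. -/
lemma polarization (x y : MonoidAlgebra ℂ G) :
    (4:ℂ) • (x * y) =
      (gstar G (y + gstar G x) * (y + gstar G x)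
        - gstar G (y - gstar G x) * (y - gstar G x))
      + Complex.I • (gstar G (y + Complex.I • gstar G x) * (y + Complex.I • gstar G x)
        - gstar G (y - Complex.I • gstar G x) * (y - Complex.I • gstar G x)) := by
  simp only [gstar_add, gstar_sub, gstar_smul, gstar_gstar, Complex.conj_I]
  simp only [mul_add, add_mul, sub_mul, mul_sub, smul_mul_assoc, mul_smul_comm,
    neg_smul, smul_smul, neg_mul, mul_neg, smul_neg, neg_neg, smul_sub, smul_add]
  match_scalars <;> simp [Complex.I_mul_I] <;> ring

/-- The inductive property used for the main theorem. -/
def Good (S : Finset G) (b : MonoidAlgebra ℂ G) (C : ℝ) : Prop :=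
  ∀ (R : Type v) (_ : Field R) (_ : LinearOrder R) (_ : IsStrictOrderedRing R) (f : ℝ →+*o R)
    (φ : MonoidAlgebra ℂ G → Cplx R),
    OmegaHermLinear f.toRingHom φ → OmegaCompletelyPositive φ →
    ∀ d : R, φ (Delta G S) = algebraMap R (Cplx R) d → 0 ≤ d →
      ∃ A B : R, φ b = algebraMap R (Cplx R) A + algebraMap R (Cplx R) B * Cplx.I R ∧
        A ^ 2 + B ^ 2 ≤ (f.toRingHom C * d) ^ 2

lemma good_zero {S : Finset G} : Good.{u, v} S 0 0 := by
  intro R _ _ _ f φ hlin _ d _ _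
  refine ⟨0, 0, ?_, by simpa using sq_nonneg (f.toRingHom 0 * d)⟩
  rw [phi_zero hlin]
  simp

lemma good_add {S : Finset G} {b₁ b₂ : MonoidAlgebra ℂ G} {C₁ C₂ : ℝ}
    (h₁ : Good.{u, v} S b₁ C₁) (h₂ : Good.{u, v} S b₂ C₂)
    (hb₁ : b₁ ∈ omega G) (hb₂ : b₂ ∈ omega G) (hC₁ : 0 ≤ C₁) (hC₂ : 0 ≤ C₂) :
    Good.{u, v} S (b₁ + b₂) (C₁ + C₂) := by
  intro R i1 i2 i3 f φ hlin hcp d hd hd0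
  obtain ⟨A₁, B₁, he₁, hb₁'⟩ := h₁ R i1 i2 i3 f φ hlin hcp d hd hd0
  obtain ⟨A₂, B₂, he₂, hb₂'⟩ := h₂ R i1 i2 i3 f φ hlin hcp d hd hd0
  refine ⟨A₁ + A₂, B₁ + B₂, ?_, ?_⟩
  · rw [phi_add hlin hb₁ hb₂, he₁, he₂, map_add, map_add]
    ring
  · set p := f.toRingHom C₁ * d with hp
    set q := f.toRingHom C₂ * d with hq
    have hp0 : 0 ≤ p := mul_nonneg (ordf_nonneg f hC₁) hd0
    have hq0 : 0 ≤ q := mul_nonneg (ordf_nonneg f hC₂) hd0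
    have hcs : (A₁ * A₂ + B₁ * B₂) ^ 2 ≤ (A₁^2 + B₁^2) * (A₂^2 + B₂^2) := by
      nlinarith [sq_nonneg (A₁ * B₂ - A₂ * B₁)]
    have hcross : A₁ * A₂ + B₁ * B₂ ≤ p * q := by
      nlinarith [mul_nonneg hp0 hq0, sq_nonneg (A₁*A₂ + B₁*B₂ + p*q),
        mul_le_mul hb₁' hb₂' (by positivity) (by positivity)]
    have hfin : f.toRingHom (C₁ + C₂) * d = p + q := by
      rw [map_add]; ring
    rw [hfin]
    nlinarith [hcross, hb₁', hb₂']

lemma good_smul {S : Finset G} {b : MonoidAlgebra ℂ G} {C : ℝ} (c : ℂ)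
    (h : Good.{u, v} S b C) (hb : b ∈ omega G) (hC : 0 ≤ C) :
    Good.{u, v} S (c • b) ((|c.re| + |c.im|) * C) := by
  intro R i1 i2 i3 f φ hlin hcp d hd hd0
  obtain ⟨A, B, he, hbd⟩ := h R i1 i2 i3 f φ hlin hcp d hd hd0
  set x := f.toRingHom c.re with hx
  set y := f.toRingHom c.im with hy
  refine ⟨x * A - y * B, x * B + y * A, ?_, ?_⟩
  · rw [phi_smul hlin c hb, he, Cplx.emb_apply]
    have hI := Cplx.I_sq R
    rw [map_sub, map_add, _root_.map_mul, _root_.map_mul, _root_.map_mul, _root_.map_mul]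
    linear_combination (algebraMap R (Cplx R) y * algebraMap R (Cplx R) B) * hI
  · have hM : x ^ 2 + y ^ 2 ≤ (f.toRingHom (|c.re| + |c.im|)) ^ 2 := by
      have h1 : c.re ^ 2 + c.im ^ 2 ≤ (|c.re| + |c.im|) ^ 2 := by
        nlinarith [abs_nonneg c.re, abs_nonneg c.im, sq_abs c.re, sq_abs c.im,
          mul_nonneg (abs_nonneg c.re) (abs_nonneg c.im)]
      have h2 := f.monotone' h1
      calc x ^ 2 + y ^ 2 = f.toRingHom (c.re ^ 2 + c.im ^ 2) := by
            rw [map_add, map_pow, map_pow]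
        _ ≤ f.toRingHom ((|c.re| + |c.im|) ^ 2) := h2
        _ = (f.toRingHom (|c.re| + |c.im|)) ^ 2 := by rw [map_pow]
    have hfin : f.toRingHom ((|c.re| + |c.im|) * C) * d
        = f.toRingHom (|c.re| + |c.im|) * (f.toRingHom C * d) := by
      rw [_root_.map_mul]; ring
    rw [hfin]
    have hM0 : (0:R) ≤ f.toRingHom (|c.re| + |c.im|) := ordf_nonneg f (by positivity)
    nlinarith [hbd, hM, sq_nonneg (f.toRingHom C * d), sq_nonneg A, sq_nonneg B,
      mul_le_mul hM hbd (by positivity) (by positivity)]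

set_option maxHeartbeats 1000000 in
lemma good_gen {S : Finset G} (hsym : ∀ s ∈ S, s⁻¹ ∈ S)
    (hgen : Subgroup.closure (S : Set G) = ⊤) {x y : MonoidAlgebra ℂ G}
    (hx : x ∈ omega G) (hy : y ∈ omega G) :
    ∃ C : ℝ, 0 ≤ C ∧ Good.{u, v} S (x * y) C := by
  set us := gstar G x with hu
  have huω : us ∈ omega G := omega_gstar hx
  have hv0 : y + us ∈ omega G := omega_add hy huω
  have hv1 : y + Complex.I • us ∈ omega G := omega_add hy (omega_smul _ huω)
  have hv2 : y - us ∈ omega G := omega_sub hy huω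
  have hv3 : y - Complex.I • us ∈ omega G := omega_sub hy (omega_smul _ huω)
  obtain ⟨C0, hC00, hc0⟩ := lemmaA hsym hgen hv0
  obtain ⟨C1, hC10, hc1⟩ := lemmaA hsym hgen hv1
  obtain ⟨C2, hC20, hc2⟩ := lemmaA hsym hgen hv2
  obtain ⟨C3, hC30, hc3⟩ := lemmaA hsym hgen hv3
  refine ⟨4⁻¹ * (C0 + C1 + C2 + C3), by positivity, ?_⟩
  intro R i1 i2 i3 f φ hlin hcp d hd hd0
  obtain ⟨r0, hr00, hr0le, hq0⟩ := phi_bound hlin hcp hv0 hc0 hd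
  obtain ⟨r1, hr10, hr1le, hq1⟩ := phi_bound hlin hcp hv1 hc1 hd
  obtain ⟨r2, hr20, hr2le, hq2⟩ := phi_bound hlin hcp hv2 hc2 hd
  obtain ⟨r3, hr30, hr3le, hq3⟩ := phi_bound hlin hcp hv3 hc3 hd
  have hq0ω : gstar G (y + us) * (y + us) ∈ omega G := omega_mul_left _ hv0
  have hq1ω : gstar G (y + Complex.I • us) * (y + Complex.I • us) ∈ omega G :=
    omega_mul_left _ hv1
  have hq2ω : gstar G (y - us) * (y - us) ∈ omega G := omega_mul_left _ hv2
  have hq3ω : gstar G (y - Complex.I • us) * (y - Complex.I • us) ∈ omega G :=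
    omega_mul_left _ hv3
  set w := (gstar G (y + us) * (y + us) - gstar G (y - us) * (y - us))
      + Complex.I • (gstar G (y + Complex.I • us) * (y + Complex.I • us)
        - gstar G (y - Complex.I • us) * (y - Complex.I • us)) with hw
  have hwω : w ∈ omega G :=
    omega_add (omega_sub hq0ω hq2ω) (omega_smul _ (omega_sub hq1ω hq3ω))
  have hxy : x * y = (4⁻¹:ℂ) • w := by
    rw [hw, ← polarization x y, smul_smul]
    norm_num
  set k := f.toRingHom (4⁻¹:ℝ) with hk
  have hk0 : 0 ≤ k := ordf_nonneg f (by norm_num)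
  have hφw : φ w = algebraMap R (Cplx R) (r0 - r2)
      + Cplx.I R * algebraMap R (Cplx R) (r1 - r3) := by
    rw [hw, phi_add hlin (omega_sub hq0ω hq2ω) (omega_smul _ (omega_sub hq1ω hq3ω)),
      phi_sub hlin hq0ω hq2ω, phi_smul hlin _ (omega_sub hq1ω hq3ω),
      phi_sub hlin hq1ω hq3ω, hq0, hq1, hq2, hq3, Cplx.emb_I, map_sub, map_sub]
  have hφxy : φ (x * y) = algebraMap R (Cplx R) (k * (r0 - r2))
      + algebraMap R (Cplx R) (k * (r1 - r3)) * Cplx.I R := by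
    rw [hxy, phi_smul hlin _ hwω, hφw,
      show (4⁻¹:ℂ) = ((4⁻¹:ℝ):ℂ) by norm_num, Cplx.emb_ofReal, ← hk,
      _root_.map_mul, _root_.map_mul]
    ring
  refine ⟨k * (r0 - r2), k * (r1 - r3), hφxy, ?_⟩
  set p0 := f.toRingHom C0 * d
  set p1 := f.toRingHom C1 * d
  set p2 := f.toRingHom C2 * d
  set p3 := f.toRingHom C3 * d
  have hp00 : 0 ≤ p0 := mul_nonneg (ordf_nonneg f hC00) hd0
  have hp10 : 0 ≤ p1 := mul_nonneg (ordf_nonneg f hC10) hd0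
  have hp20 : 0 ≤ p2 := mul_nonneg (ordf_nonneg f hC20) hd0
  have hp30 : 0 ≤ p3 := mul_nonneg (ordf_nonneg f hC30) hd0
  have e1 : (r0 - r2) ^ 2 ≤ (p0 + p2) ^ 2 := by nlinarith
  have e2 : (r1 - r3) ^ 2 ≤ (p1 + p3) ^ 2 := by nlinarith
  have e3 : (p0 + p2) ^ 2 + (p1 + p3) ^ 2 ≤ (p0 + p1 + p2 + p3) ^ 2 := by
    nlinarith [mul_nonneg (add_nonneg hp00 hp20) (add_nonneg hp10 hp30)]
  have e4 : (r0 - r2) ^ 2 + (r1 - r3) ^ 2 ≤ (p0 + p1 + p2 + p3) ^ 2 := by linarith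
  have hfin : f.toRingHom (4⁻¹ * (C0 + C1 + C2 + C3)) * d = k * (p0 + p1 + p2 + p3) := by
    rw [_root_.map_mul, map_add, map_add, map_add]
    ring
  rw [hfin]
  nlinarith [mul_le_mul_of_nonneg_left e4 (sq_nonneg k)]

lemma span_prod_subset_omega {z : MonoidAlgebra ℂ G}
    (hz : z ∈ Submodule.span ℂ {x : MonoidAlgebra ℂ G |
      ∃ a ∈ omega G, ∃ b ∈ omega G, x = a * b}) : z ∈ omega G := by
  induction hz using Submodule.span_induction with
  | mem w hw =>
      obtain ⟨a, ha, b, hb, rfl⟩ := hw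
      exact omega_mul_left _ hb
  | zero => exact omega_zero
  | add a b ha hb iha ihb => exact omega_add iha ihb
  | smul c a ha iha => exact omega_smul _ iha

end MainProof
/-- **Functionals on the augmentation ideal are bounded by the Laplacian on `ω²(Γ)`.**
Let `Γ` be generated by the finite symmetric set `S`.  For every `b ∈ ω²(Γ)` there is a
constant `C(b) ∈ ℝ` such that for every real closed extension field `R` of `ℝ` and every
completely positive `ℂ`-linear functional `φ : ω(Γ) → C = R[i]` with `φ(a*) = conj (φ a)`
one has `|φ(b)| ≤ C(b)·φ(Δ(S))` (the absolute value `|φ(b)|` being encoded by the element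
`t ≥ 0` of `R` with `t² = φ(b)·conj(φ(b))`). -/
theorem omega_cp_bounded_by_laplacian (S : Finset Γ)
    (hsym : ∀ s ∈ S, s⁻¹ ∈ S) (hgen : Subgroup.closure (S : Set Γ) = ⊤)
    (b : MonoidAlgebra ℂ Γ) (hb : b ∈ omegaSq Γ) :
    ∃ Cb : ℝ, ∀ (R : Type v) (_ : Field R) (_ : LinearOrder R) (_ : IsStrictOrderedRing R) (f : ℝ →+*o R),
      IsRealClosed' R →
      ∀ φ : MonoidAlgebra ℂ Γ → Cplx R,
        OmegaHermLinear f.toRingHom φ → OmegaCompletelyPositive φ →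
        ∀ t : R, 0 ≤ t →
          algebraMap R (Cplx R) (t ^ 2) = φ b * Cplx.conj (φ b) →
          Cplx.nonneg (algebraMap R (Cplx R) (f Cb) * φ (Delta Γ S) -
            algebraMap R (Cplx R) t) := by
  have hb' : b ∈ Submodule.span ℂ {x : MonoidAlgebra ℂ Γ |
      ∃ a ∈ omega Γ, ∃ b ∈ omega Γ, x = a * b} := hb
  clear hb
  have main : ∃ C : ℝ, 0 ≤ C ∧ Good.{u, v} S b C := by
    induction hb' using Submodule.span_induction with
    | mem w hw =>
        obtain ⟨p, hp, q, hq, rfl⟩ := hw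
        exact good_gen hsym hgen hp hq
    | zero => exact ⟨0, le_rfl, good_zero⟩
    | add a b' ha hb'' iha ihb =>
        obtain ⟨C₁, hC₁, hg₁⟩ := iha
        obtain ⟨C₂, hC₂, hg₂⟩ := ihb
        exact ⟨C₁ + C₂, by positivity, good_add hg₁ hg₂ (span_prod_subset_omega ha)
          (span_prod_subset_omega hb'') hC₁ hC₂⟩
    | smul c a ha iha =>
        obtain ⟨C, hC, hg⟩ := iha
        exact ⟨(|c.re| + |c.im|) * C, by positivity,
          good_smul c hg (span_prod_subset_omega ha) hC⟩
  obtain ⟨C, hC0, hgood⟩ := main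
  refine ⟨C, ?_⟩
  intro R i1 i2 i3 f hRC φ hlin hcp t ht0 ht2
  obtain ⟨d, hd0, hd⟩ := phi_Delta hlin hcp hsym
  obtain ⟨A, B, hφb, hbd⟩ := hgood R i1 i2 i3 f φ hlin hcp d hd hd0
  have hconj : Cplx.conj (φ b) = algebraMap R (Cplx R) A
      - algebraMap R (Cplx R) B * Cplx.I R := by
    rw [hφb, map_add, _root_.map_mul, Cplx.conj_algebraMap, Cplx.conj_algebraMap,
      Cplx.conj_I']
    ring
  have hI := Cplx.I_sq R
  have hprod : φ b * Cplx.conj (φ b) = algebraMap R (Cplx R) (A ^ 2 + B ^ 2) := by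
    rw [hconj, hφb, map_add, map_pow, map_pow]
    linear_combination (-(algebraMap R (Cplx R) B) ^ 2) * hI
  have ht2' : t ^ 2 = A ^ 2 + B ^ 2 := Cplx.aR_injective (by rw [ht2, hprod])
  have hco : f C = f.toRingHom C := rfl
  have hfC0 : 0 ≤ f.toRingHom C := ordf_nonneg f hC0
  have htle : t ≤ f.toRingHom C * d := by nlinarith [hbd, ht2', mul_nonneg hfC0 hd0, sq_nonneg (t - f.toRingHom C * d), sq_nonneg (t + f.toRingHom C * d)]
  rw [hd, hco, ← _root_.map_mul, ← map_sub]
  exact Cplx.nonneg_aR (by linarith)
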